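/- In the type (ii) algebra A, a subspace M ⊆ A closed under multiplication is a maximal subalgebra (i.e. M ≠ A and there is no multiplication-closed subspace strictly between M and A) if and only if M = span{a², a³} or M = span{a − a², a − a³}. Moreover both of these subspaces M satisfy x·m ∈ M for all x ∈ A and m ∈ M (they are left ideals), even though A is not nilpotent. -/

import Mathlib

/-- `lpow μ x k` is the left-normed power `x^(k+1)`; so `lpow μ x 0 = x`,
`lpow μ x 1 = x·x = x²`, `lpow μ x 2 = x·x² = x³`, etc. -/
def lpow {A : Type*} [AddCommGroup A] [Module ℂ A]
    (μ : A →ₗ[ℂ] A →ₗ[ℂ] A) (x : A) : ℕ → A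
  | 0 => x
  | n + 1 => μ x (lpow μ x n)
/-- The 3-dimensional cyclic Leibniz algebra of type (ii): A = ℂ³ with basis
a = e₀, a² = e₁, a³ = e₂ and multiplication u·v = u₀ • L_a(v), where
L_a(a) = a², L_a(a²) = a³, L_a(a³) = a³ (so a²·v = a³·v = 0). -/
noncomputable def mulII : (Fin 3 → ℂ) →ₗ[ℂ] (Fin 3 → ℂ) →ₗ[ℂ] (Fin 3 → ℂ) :=
  (LinearMap.proj 0).smulRight (Matrix.mulVecLin !![0,0,0;1,0,0;0,1,1])

noncomputable def a : Fin 3 → ℂ := ![1,0,0]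
noncomputable def a2 : Fin 3 → ℂ := ![0,1,0]
noncomputable def a3 : Fin 3 → ℂ := ![0,0,1]
lemma mulII_apply (u v : Fin 3 → ℂ) :
    mulII u v = u 0 • ![0, v 0, v 1 + v 2] := by
  ext i
  fin_cases i <;>
    simp [mulII, Matrix.mulVecLin, Matrix.mulVec, dotProduct, Fin.sum_univ_three]

noncomputable def sumF : (Fin 3 → ℂ) →ₗ[ℂ] ℂ :=
  (LinearMap.proj 0 : (Fin 3 → ℂ) →ₗ[ℂ] ℂ) + (LinearMap.proj 1 : (Fin 3 → ℂ) →ₗ[ℂ] ℂ)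
    + (LinearMap.proj 2 : (Fin 3 → ℂ) →ₗ[ℂ] ℂ)

lemma span1_eq :
    Submodule.span ℂ ({a2, a3} : Set (Fin 3 → ℂ)) =
      LinearMap.ker (LinearMap.proj 0 : (Fin 3 → ℂ) →ₗ[ℂ] ℂ) := by
  apply le_antisymm
  · rw [Submodule.span_le]
    rintro v (rfl | rfl) <;> simp [a2, a3]
  · intro v hv
    simp only [LinearMap.mem_ker, LinearMap.proj_apply] at hv
    have : v = v 1 • a2 + v 2 • a3 := by
      ext i; fin_cases i <;> simp [a2, a3, hv]
    rw [this]
    exact Submodule.add_mem _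
      (Submodule.smul_mem _ _ (Submodule.subset_span (by simp)))
      (Submodule.smul_mem _ _ (Submodule.subset_span (by simp)))

lemma span2_eq :
    Submodule.span ℂ ({a - a2, a - a3} : Set (Fin 3 → ℂ)) = LinearMap.ker sumF := by
  apply le_antisymm
  · rw [Submodule.span_le]
    rintro v (rfl | rfl) <;> simp [sumF, a, a2, a3]
  · intro v hv
    simp only [LinearMap.mem_ker, sumF, LinearMap.add_apply, LinearMap.proj_apply] at hv
    have : v = (-(v 1)) • (a - a2) + (-(v 2)) • (a - a3) := by
      ext i; fin_cases i <;> simp [a, a2, a3] <;> linear_combination hv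
    rw [this]
    exact Submodule.add_mem _
      (Submodule.smul_mem _ _ (Submodule.subset_span (by simp)))
      (Submodule.smul_mem _ _ (Submodule.subset_span (by simp)))

lemma mem_span1 (v : Fin 3 → ℂ) :
    v ∈ Submodule.span ℂ ({a2, a3} : Set (Fin 3 → ℂ)) ↔ v 0 = 0 := by
  rw [span1_eq]; simp

lemma mem_span2 (v : Fin 3 → ℂ) :
    v ∈ Submodule.span ℂ ({a - a2, a - a3} : Set (Fin 3 → ℂ)) ↔ v 0 + v 1 + v 2 = 0 := by
  rw [span2_eq]; simp [sumF]

lemma ideal1 : ∀ x : Fin 3 → ℂ, ∀ m ∈ Submodule.span ℂ ({a2, a3} : Set (Fin 3 → ℂ)),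
    mulII x m ∈ Submodule.span ℂ ({a2, a3} : Set (Fin 3 → ℂ)) := by
  intro x m _
  rw [mem_span1, mulII_apply]
  simp

lemma ideal2 : ∀ x : Fin 3 → ℂ, ∀ m ∈ Submodule.span ℂ ({a - a2, a - a3} : Set (Fin 3 → ℂ)),
    mulII x m ∈ Submodule.span ℂ ({a - a2, a - a3} : Set (Fin 3 → ℂ)) := by
  intro x m hm
  rw [mem_span2] at hm ⊢
  rw [mulII_apply]
  simp only [Pi.smul_apply, Matrix.cons_val_zero, Matrix.cons_val_one, Matrix.head_cons,
    Matrix.cons_val_two, Matrix.tail_cons, smul_eq_mul]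
  linear_combination x 0 * hm

-- if M is closed and contains m with m 0 ≠ 0 and sum m ≠ 0, then M = ⊤
lemma eq_top_of (M : Submodule ℂ (Fin 3 → ℂ)) (hM : ∀ u ∈ M, ∀ v ∈ M, mulII u v ∈ M)
    (m : Fin 3 → ℂ) (hm : m ∈ M) (h0 : m 0 ≠ 0) (hs : m 0 + m 1 + m 2 ≠ 0) : M = ⊤ := by
  have hw : mulII m m ∈ M := hM m hm m hm
  have hw2 : mulII m (mulII m m) ∈ M := hM m hm _ hw
  have e2 : mulII m (mulII m m) = (m 0 * m 0 * (m 0 + m 1 + m 2)) • a3 := by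
    rw [mulII_apply, mulII_apply]
    ext i; fin_cases i <;> simp [a3] <;> ring
  have ha3 : a3 ∈ M := by
    have := M.smul_mem (m 0 * m 0 * (m 0 + m 1 + m 2))⁻¹ hw2
    rwa [e2, smul_smul, inv_mul_cancel₀ (mul_ne_zero (mul_ne_zero h0 h0) hs), one_smul] at this
  have ha2 : a2 ∈ M := by
    have e1 : mulII m m = (m 0 * m 0) • a2 + (m 0 * (m 1 + m 2)) • a3 := by
      rw [mulII_apply]; ext i; fin_cases i <;> simp [a2, a3] <;> ring
    have h : (m 0 * m 0) • a2 ∈ M := by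
      have := M.sub_mem hw (M.smul_mem (m 0 * (m 1 + m 2)) ha3)
      rwa [e1, add_sub_cancel_right] at this
    have := M.smul_mem (m 0 * m 0)⁻¹ h
    rwa [smul_smul, inv_mul_cancel₀ (mul_ne_zero h0 h0), one_smul] at this
  have ha : a ∈ M := by
    have e : a = (m 0)⁻¹ • (m - m 1 • a2 - m 2 • a3) := by
      ext i; fin_cases i <;> simp [a, a2, a3, Matrix.vecHead, Matrix.vecTail] <;> field_simp
    rw [e]
    exact M.smul_mem _ (M.sub_mem (M.sub_mem hm (M.smul_mem _ ha2)) (M.smul_mem _ ha3))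
  rw [eq_top_iff]
  intro v _
  have e : v = v 0 • a + v 1 • a2 + v 2 • a3 := by
    ext i; fin_cases i <;> simp [a, a2, a3]
  rw [e]
  exact M.add_mem (M.add_mem (M.smul_mem _ ha) (M.smul_mem _ ha2)) (M.smul_mem _ ha3)

lemma key (M : Submodule ℂ (Fin 3 → ℂ)) (hM : ∀ u ∈ M, ∀ v ∈ M, mulII u v ∈ M)
    (hMtop : M ≠ ⊤) :
    M ≤ Submodule.span ℂ ({a2, a3} : Set (Fin 3 → ℂ)) ∨
    M ≤ Submodule.span ℂ ({a - a2, a - a3} : Set (Fin 3 → ℂ)) := by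
  by_cases h1 : M ≤ Submodule.span ℂ ({a2, a3} : Set (Fin 3 → ℂ))
  · exact Or.inl h1
  right
  obtain ⟨v, hv, hv0⟩ := SetLike.not_le_iff_exists.mp h1
  rw [mem_span1] at hv0
  have hsum : ∀ m ∈ M, m 0 ≠ 0 → m 0 + m 1 + m 2 = 0 := by
    intro m hm h0
    by_contra hs
    exact hMtop (eq_top_of M hM m hm h0 hs)
  intro m hm
  rw [mem_span2]
  by_cases h0 : m 0 = 0
  · have h1 := hsum (v + m) (M.add_mem hv hm) (by simpa [h0] using hv0)
    have h2 := hsum v hv hv0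
    simp only [Pi.add_apply] at h1
    linear_combination h1 - h2
  · exact hsum m hm h0

lemma span1_ne_top : Submodule.span ℂ ({a2, a3} : Set (Fin 3 → ℂ)) ≠ ⊤ := by
  intro h
  have : a ∈ Submodule.span ℂ ({a2, a3} : Set (Fin 3 → ℂ)) := h ▸ Submodule.mem_top
  rw [mem_span1] at this
  simp [a] at this

lemma span2_ne_top : Submodule.span ℂ ({a - a2, a - a3} : Set (Fin 3 → ℂ)) ≠ ⊤ := by
  intro h
  have : a ∈ Submodule.span ℂ ({a - a2, a - a3} : Set (Fin 3 → ℂ)) := h ▸ Submodule.mem_top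
  rw [mem_span2] at this
  simp [a] at this

lemma pow_aux : ∀ k : ℕ, (mulII a ^ (k + 2)) a = a3 := by
  intro k
  induction k with
  | zero =>
    show (mulII a ^ 2) a = a3
    rw [pow_succ, pow_one, Module.End.mul_apply, mulII_apply, mulII_apply]
    ext i; fin_cases i <;> simp [a, a3]
  | succ n ih =>
    rw [show n + 1 + 2 = (n + 2) + 1 from rfl, pow_succ', Module.End.mul_apply, ih, mulII_apply]
    ext i; fin_cases i <;> simp [a, a3]


/-- In the type (ii) algebra, a multiplication-closed subspace M is a
maximal subalgebra iff M = span{a², a³} or M = span{a − a², a − a³}; both of these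
are left ideals, even though A is not nilpotent. -/
theorem typeII_maximal_subalgebras :
    (∀ M : Submodule ℂ (Fin 3 → ℂ), (∀ u ∈ M, ∀ v ∈ M, mulII u v ∈ M) →
      ((M ≠ ⊤ ∧
          ¬ ∃ N : Submodule ℂ (Fin 3 → ℂ),
              (∀ u ∈ N, ∀ v ∈ N, mulII u v ∈ N) ∧ M < N ∧ N < ⊤) ↔
        (M = Submodule.span ℂ ({a2, a3} : Set (Fin 3 → ℂ)) ∨
          M = Submodule.span ℂ ({a - a2, a - a3} : Set (Fin 3 → ℂ))))) ∧
    (∀ x : Fin 3 → ℂ, ∀ m ∈ Submodule.span ℂ ({a2, a3} : Set (Fin 3 → ℂ)),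
        mulII x m ∈ Submodule.span ℂ ({a2, a3} : Set (Fin 3 → ℂ))) ∧
    (∀ x : Fin 3 → ℂ, ∀ m ∈ Submodule.span ℂ ({a - a2, a - a3} : Set (Fin 3 → ℂ)),
        mulII x m ∈ Submodule.span ℂ ({a - a2, a - a3} : Set (Fin 3 → ℂ))) ∧
    (∀ k : ℕ, (mulII a ^ k) a ≠ 0) := by
  refine ⟨?_, ideal1, ideal2, ?_⟩
  · intro M hM
    constructor
    · rintro ⟨hMtop, hno⟩
      rcases key M hM hMtop with h | h
      · left
        rcases eq_or_lt_of_le h with h' | h'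
        · exact h'
        · exact absurd ⟨_, fun u _ v hv => ideal1 u v hv,
            h', lt_top_iff_ne_top.mpr span1_ne_top⟩ hno
      · right
        rcases eq_or_lt_of_le h with h' | h'
        · exact h'
        · exact absurd ⟨_, fun u _ v hv => ideal2 u v hv,
            h', lt_top_iff_ne_top.mpr span2_ne_top⟩ hno
    · rintro (rfl | rfl)
      · refine ⟨span1_ne_top, ?_⟩
        rintro ⟨N, hN, hlt, hNtop⟩
        rcases key N hN (ne_of_lt hNtop) with h | h
        · exact absurd (lt_of_lt_of_le hlt h) (lt_irrefl _)
        · have : a2 ∈ Submodule.span ℂ ({a - a2, a - a3} : Set (Fin 3 → ℂ)) :=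
            h (le_of_lt hlt ((mem_span1 a2).mpr (by simp [a2])))
          rw [mem_span2] at this
          simp [a2] at this
      · refine ⟨span2_ne_top, ?_⟩
        rintro ⟨N, hN, hlt, hNtop⟩
        rcases key N hN (ne_of_lt hNtop) with h | h
        · have : a - a2 ∈ Submodule.span ℂ ({a2, a3} : Set (Fin 3 → ℂ)) :=
            h (le_of_lt hlt ((mem_span2 (a - a2)).mpr (by simp [a, a2])))
          rw [mem_span1] at this
          simp [a, a2] at this
        · exact absurd (lt_of_lt_of_le hlt h) (lt_irrefl _)
  · intro k
    match k with
    | 0 => simp only [pow_zero, Module.End.one_apply]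
           intro h; have := congrFun h 0; simp [a] at this
    | 1 => rw [pow_one, mulII_apply]
           intro h; have := congrFun h 1; simp [a] at this
    | (n + 2) => rw [pow_aux n]
                 intro h; have := congrFun h 2; simp [a3] at this
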